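/- arXiv:1308.2373 — 2 statements merged into one kernel-verified Lean document; each statement's English description precedes it below -/
import Mathlib

section
/- For p > 1 and a nonnegative measurable function f on (0,∞) with F(x) = ∫₀ˣ f(t) dt, one has ∫₀^∞ (F(x)/x)^p dx ≤ (p/(p-1))^p ∫₀^∞ f(x)^p dx. -/
open MeasureTheory Set
open scoped ENNReal

lemma lint_scale (c : ℝ) (hc : 0 < c) (h : ℝ → ℝ≥0∞) (hm : Measurable h) :
    ∫⁻ x, h (c * x) = ENNReal.ofReal c⁻¹ * ∫⁻ x, h x := by
  rw [← lintegral_map hm (measurable_const_mul c), Real.map_volume_mul_left hc.ne',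
    lintegral_smul_measure, abs_of_pos (inv_pos.2 hc), smul_eq_mul]

lemma weight_integral (p : ℝ) (hp : 1 < p) :
    ∫⁻ s in Ioc (0:ℝ) 1, ENNReal.ofReal (s ^ (-(1/p))) = ENNReal.ofReal (p / (p - 1)) := by
  have hr : (-1:ℝ) < -(1/p) := by
    have h0 : (0:ℝ) < p := lt_trans one_pos hp
    have : 1/p < 1 := by rw [div_lt_one h0]; exact hp
    linarith
  have hint : IntegrableOn (fun s : ℝ => s ^ (-(1/p))) (Ioc 0 1) volume := by
    have := intervalIntegral.intervalIntegrable_rpow' (a := 0) (b := 1) hr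
    rwa [intervalIntegrable_iff_integrableOn_Ioc_of_le zero_le_one] at this
  rw [← ofReal_integral_eq_lintegral_ofReal hint]
  · congr 1
    have h0 : (0:ℝ) < p := lt_trans one_pos hp
    have := integral_rpow (a := 0) (b := 1) (r := -(1/p)) (Or.inl hr)
    rw [intervalIntegral.integral_of_le zero_le_one] at this
    rw [this, Real.one_rpow, Real.zero_rpow (by linarith)]
    field_simp
    ring
  · exact (ae_restrict_iff' measurableSet_Ioc).2 (Filter.Eventually.of_forall
      fun s hs => Real.rpow_nonneg hs.1.le _)

lemma holder_point (p : ℝ) (hp : 1 < p) (g : ℝ → ℝ≥0∞) (hg : Measurable g) :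
    (∫⁻ s in Ioc (0:ℝ) 1, g s) ^ p ≤
      ENNReal.ofReal ((p/(p-1)) ^ (p-1)) *
        ∫⁻ s in Ioc (0:ℝ) 1, g s ^ p * ENNReal.ofReal (s ^ ((p-1)/p)) := by
  set q : ℝ := p / (p - 1) with hq
  have hpq : p.HolderConjugate q := Real.HolderConjugate.conjExponent hp
  have hp0 : (0:ℝ) < p := hpq.pos
  have hq0 : (0:ℝ) < q := hpq.symm.pos
  set a : ℝ := 1 / (p * q) with ha
  have ha0 : 0 < a := by positivity
  have hap : a * p = (p - 1) / p := by
    have hp1 : p - 1 ≠ 0 := by linarith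
    rw [ha, hq]
    field_simp
  have haq : a * q = 1 / p := by
    rw [ha]
    field_simp
  set u : ℝ → ℝ≥0∞ := fun s => g s * ENNReal.ofReal (s ^ a) with hu
  set v : ℝ → ℝ≥0∞ := fun s => ENNReal.ofReal (s ^ (-a)) with hv
  have hum : Measurable u := hg.mul (measurable_id.pow measurable_const).ennreal_ofReal
  have hvm : Measurable v := (measurable_id.pow measurable_const).ennreal_ofReal
  have step1 : ∫⁻ s in Ioc (0:ℝ) 1, g s = ∫⁻ s in Ioc (0:ℝ) 1, (u * v) s := by
    refine setLIntegral_congr_fun measurableSet_Ioc (fun s hs => ?_)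
    have hs0 : 0 < s := hs.1
    simp only [hu, hv, Pi.mul_apply]
    rw [mul_assoc, ← ENNReal.ofReal_mul (Real.rpow_nonneg hs0.le _),
      ← Real.rpow_add hs0, add_neg_cancel, Real.rpow_zero, ENNReal.ofReal_one, mul_one]
  have holder := ENNReal.lintegral_mul_le_Lp_mul_Lq (volume.restrict (Ioc (0:ℝ) 1)) hpq
    hum.aemeasurable hvm.aemeasurable
  have hup : ∫⁻ s in Ioc (0:ℝ) 1, u s ^ p
      = ∫⁻ s in Ioc (0:ℝ) 1, g s ^ p * ENNReal.ofReal (s ^ ((p-1)/p)) := by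
    refine setLIntegral_congr_fun measurableSet_Ioc (fun s hs => ?_)
    have hs0 : 0 < s := hs.1
    rw [hu, ENNReal.mul_rpow_of_nonneg _ _ hp0.le,
      ENNReal.ofReal_rpow_of_nonneg (Real.rpow_nonneg hs0.le _) hp0.le,
      ← Real.rpow_mul hs0.le, hap]
  have hvq : ∫⁻ s in Ioc (0:ℝ) 1, v s ^ q = ENNReal.ofReal (p / (p-1)) := by
    rw [← weight_integral p hp]
    refine setLIntegral_congr_fun measurableSet_Ioc (fun s hs => ?_)
    have hs0 : 0 < s := hs.1
    rw [hv, ENNReal.ofReal_rpow_of_nonneg (Real.rpow_nonneg hs0.le _) hq0.le,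
      ← Real.rpow_mul hs0.le, neg_mul, haq]
  rw [step1]
  calc (∫⁻ s in Ioc (0:ℝ) 1, (u*v) s) ^ p
      ≤ ((∫⁻ s in Ioc (0:ℝ) 1, u s ^ p) ^ (1/p) * (∫⁻ s in Ioc (0:ℝ) 1, v s ^ q) ^ (1/q)) ^ p :=
        ENNReal.rpow_le_rpow holder hp0.le
    _ = ENNReal.ofReal ((p/(p-1)) ^ (p-1)) *
        ∫⁻ s in Ioc (0:ℝ) 1, g s ^ p * ENNReal.ofReal (s ^ ((p-1)/p)) := by
        rw [ENNReal.mul_rpow_of_nonneg _ _ hp0.le, ← ENNReal.rpow_mul, ← ENNReal.rpow_mul,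
          one_div_mul_cancel hp0.ne', ENNReal.rpow_one, hup, hvq]
        have hqp : 1/q * p = p - 1 := by
          rw [div_mul_eq_mul_div, one_mul, hpq.div_conj_eq_sub_one]
        rw [hqp, ENNReal.ofReal_rpow_of_nonneg (by positivity) (by linarith), mul_comm]

lemma indicator_scale_eq (c : ℝ) (hc : 0 < c) (h : ℝ → ℝ≥0∞) (x : ℝ) :
    (Ioi (0:ℝ)).indicator (fun y => h (c * y)) x = ((Ioi (0:ℝ)).indicator h) (c * x) := by
  rw [Set.indicator_apply, Set.indicator_apply]
  refine if_congr ?_ rfl rfl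
  simp only [mem_Ioi]
  constructor
  · intro hx; positivity
  · intro hcx; nlinarith

lemma lint_scale_Ioi (c : ℝ) (hc : 0 < c) (h : ℝ → ℝ≥0∞) (hm : Measurable h) :
    ∫⁻ x in Ioi (0:ℝ), h (c * x) = ENNReal.ofReal c⁻¹ * ∫⁻ x in Ioi (0:ℝ), h x := by
  rw [← lintegral_indicator measurableSet_Ioi, ← lintegral_indicator measurableSet_Ioi]
  calc ∫⁻ x, (Ioi (0:ℝ)).indicator (fun y => h (c * y)) x
      = ∫⁻ x, ((Ioi (0:ℝ)).indicator h) (c * x) := by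
        simp_rw [indicator_scale_eq c hc h]
    _ = ENNReal.ofReal c⁻¹ * ∫⁻ x, ((Ioi (0:ℝ)).indicator h) x :=
        lint_scale c hc _ (hm.indicator measurableSet_Ioi)

lemma psi_eq (x : ℝ) (hx : 0 < x) (g : ℝ → ℝ≥0∞) (hg : Measurable g) :
    ∫⁻ s in Ioc (0:ℝ) 1, g (x * s) = ENNReal.ofReal x⁻¹ * ∫⁻ t in Ioc (0:ℝ) x, g t := by
  rw [← lintegral_indicator measurableSet_Ioc, ← lintegral_indicator measurableSet_Ioc]
  have key : ∀ s, (Ioc (0:ℝ) 1).indicator (fun s => g (x * s)) s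
      = ((Ioc (0:ℝ) x).indicator g) (x * s) := by
    intro s
    rw [Set.indicator_apply, Set.indicator_apply]
    refine if_congr ?_ rfl rfl
    simp only [mem_Ioc]
    constructor
    · rintro ⟨h1, h2⟩; constructor; positivity; nlinarith
    · rintro ⟨h1, h2⟩; constructor; nlinarith; nlinarith
  simp_rw [key]
  exact lint_scale x hx _ (hg.indicator measurableSet_Ioc)

lemma point_bound (p : ℝ) (hp : 1 < p) (f : ℝ → ℝ) (hf : Measurable f)
    (hpos : ∀ x ∈ Ioi (0:ℝ), 0 ≤ f x) (x : ℝ) (hx : 0 < x) :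
    ENNReal.ofReal (((∫ t in (0:ℝ)..x, f t) / x) ^ p)
      ≤ (∫⁻ s in Ioc (0:ℝ) 1, ENNReal.ofReal (f (x * s))) ^ p := by
  have hp0 : (0:ℝ) < p := lt_trans one_pos hp
  set F : ℝ := ∫ t in (0:ℝ)..x, f t with hF
  have hFeq : F = ∫ t in Ioc (0:ℝ) x, f t := intervalIntegral.integral_of_le hx.le
  have hF0 : 0 ≤ F := by
    rw [hFeq]
    exact setIntegral_nonneg measurableSet_Ioc fun t ht => hpos t ht.1
  set Φ : ℝ≥0∞ := ∫⁻ t in Ioc (0:ℝ) x, ENNReal.ofReal (f t) with hΦ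
  have key : ENNReal.ofReal F ≤ Φ := by
    by_cases hInt : IntegrableOn f (Ioc 0 x) volume
    · rw [hFeq, ofReal_integral_eq_lintegral_ofReal hInt
        ((ae_restrict_iff' measurableSet_Ioc).2 (Filter.Eventually.of_forall
          fun t ht => hpos t ht.1))]
    · rw [hFeq, MeasureTheory.integral_undef hInt]
      simp
  have hψ : ∫⁻ s in Ioc (0:ℝ) 1, ENNReal.ofReal (f (x * s)) = ENNReal.ofReal x⁻¹ * Φ :=
    psi_eq x hx _ hf.ennreal_ofReal
  rw [hψ, ← ENNReal.ofReal_rpow_of_nonneg (div_nonneg hF0 hx.le) hp0.le]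
  refine ENNReal.rpow_le_rpow ?_ hp0.le
  rw [ENNReal.ofReal_div_of_pos hx, ENNReal.div_eq_inv_mul,
    ← ENNReal.ofReal_inv_of_pos hx]
  exact mul_le_mul_right key _

theorem hardy_halfline (p : ℝ) (hp : 1 < p) (f : ℝ → ℝ) (hf : Measurable f)
    (hpos : ∀ x ∈ Ioi (0:ℝ), 0 ≤ f x)
    (hfin : ∫⁻ x in Ioi (0:ℝ), ENNReal.ofReal (f x ^ p) < ⊤) :
    ∫⁻ x in Ioi (0:ℝ), ENNReal.ofReal (((∫ t in (0:ℝ)..x, f t) / x) ^ p)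
      ≤ ENNReal.ofReal ((p / (p - 1)) ^ p) * ∫⁻ x in Ioi (0:ℝ), ENNReal.ofReal (f x ^ p) := by
  have hp0 : (0:ℝ) < p := lt_trans one_pos hp
  have hq0 : (0:ℝ) < p / (p - 1) := div_pos hp0 (by linarith)
  set g : ℝ → ℝ≥0∞ := fun t => ENNReal.ofReal (f t) with hg
  have hgm : Measurable g := hf.ennreal_ofReal
  set I : ℝ≥0∞ := ∫⁻ x in Ioi (0:ℝ), g x ^ p with hI
  have I_eq : ∫⁻ x in Ioi (0:ℝ), ENNReal.ofReal (f x ^ p) = I := by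
    refine setLIntegral_congr_fun measurableSet_Ioi (fun x hx => ?_)
    rw [hg, ENNReal.ofReal_rpow_of_nonneg (hpos x hx) hp0.le]
  have hIfin : I ≠ ⊤ := by rw [← I_eq]; exact hfin.ne
  -- measurability of the parametrized integrands
  have hprod : Measurable fun z : ℝ × ℝ => g (z.1 * z.2) :=
    hgm.comp (measurable_fst.mul measurable_snd)
  set Ψ : ℝ → ℝ≥0∞ := fun x => ∫⁻ s in Ioc (0:ℝ) 1, g (x * s) with hΨ
  have hΨm : Measurable Ψ := Measurable.lintegral_prod_right' hprod
  set A : ℝ → ℝ≥0∞ := fun x =>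
    ∫⁻ s in Ioc (0:ℝ) 1, g (x * s) ^ p * ENNReal.ofReal (s ^ ((p-1)/p)) with hA
  -- Step 1: bound the integrand pointwise by Ψ^p
  have step1 : ∫⁻ x in Ioi (0:ℝ), ENNReal.ofReal (((∫ t in (0:ℝ)..x, f t) / x) ^ p)
      ≤ ∫⁻ x in Ioi (0:ℝ), Ψ x ^ p := by
    refine setLIntegral_mono (hΨm.pow measurable_const) fun x hx => ?_
    exact point_bound p hp f hf hpos x hx
  -- Step 2: Hölder pointwise
  have step2 : ∀ x : ℝ, Ψ x ^ p ≤ ENNReal.ofReal ((p/(p-1)) ^ (p-1)) * A x := fun x =>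
    holder_point p hp (fun s => g (x * s)) (hgm.comp (measurable_const_mul x))
  -- Step 3: Tonelli + scaling
  have step3 : ∫⁻ x in Ioi (0:ℝ), A x = ENNReal.ofReal (p / (p-1)) * I := by
    have hswap : ∫⁻ x in Ioi (0:ℝ), A x
        = ∫⁻ s in Ioc (0:ℝ) 1, ∫⁻ x in Ioi (0:ℝ),
            g (x * s) ^ p * ENNReal.ofReal (s ^ ((p-1)/p)) := by
      refine lintegral_lintegral_swap ?_
      exact ((hprod.pow measurable_const).mul
        ((measurable_snd.pow measurable_const).ennreal_ofReal)).aemeasurable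
    rw [hswap]
    have inner : ∀ s ∈ Ioc (0:ℝ) 1,
        (∫⁻ x in Ioi (0:ℝ), g (x * s) ^ p * ENNReal.ofReal (s ^ ((p-1)/p)))
          = ENNReal.ofReal (s ^ (-(1/p))) * I := by
      intro s hs
      have hs0 : 0 < s := hs.1
      rw [lintegral_mul_const' _ _ ENNReal.ofReal_ne_top]
      have : ∫⁻ x in Ioi (0:ℝ), g (x * s) ^ p = ENNReal.ofReal s⁻¹ * I := by
        have := lint_scale_Ioi s hs0 (fun t => g t ^ p) (hgm.pow measurable_const)
        simp only [mul_comm s _] at this ⊢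
        exact this
      rw [this, mul_right_comm, ← ENNReal.ofReal_mul (by positivity)]
      congr 2
      rw [← Real.rpow_neg_one s, ← Real.rpow_add hs0]
      congr 1
      field_simp
      ring
    rw [setLIntegral_congr_fun measurableSet_Ioc inner,
      lintegral_mul_const' _ _ hIfin, weight_integral p hp]
  calc ∫⁻ x in Ioi (0:ℝ), ENNReal.ofReal (((∫ t in (0:ℝ)..x, f t) / x) ^ p)
      ≤ ∫⁻ x in Ioi (0:ℝ), Ψ x ^ p := step1
    _ ≤ ∫⁻ x in Ioi (0:ℝ), ENNReal.ofReal ((p/(p-1)) ^ (p-1)) * A x :=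
        lintegral_mono fun x => step2 x
    _ = ENNReal.ofReal ((p/(p-1)) ^ (p-1)) * (ENNReal.ofReal (p / (p-1)) * I) := by
        rw [lintegral_const_mul' _ _ ENNReal.ofReal_ne_top, step3]
    _ = ENNReal.ofReal ((p / (p - 1)) ^ p) * I := by
        rw [← mul_assoc, ← ENNReal.ofReal_mul (by positivity)]
        congr 1
        nth_rewrite 2 [← Real.rpow_one (p/(p-1))]
        rw [← Real.rpow_add hq0]
        norm_num
    _ = ENNReal.ofReal ((p / (p - 1)) ^ p) * ∫⁻ x in Ioi (0:ℝ), ENNReal.ofReal (f x ^ p) := by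
        rw [I_eq]
end

section
/- Let P : ℝⁿ → ℝ be strictly positive with ∫ P = 1, and define F₀(x) = ∫₀^∞ t^{-n/2} P(t^{-1/2} x) dt/t for x ≠ 0. Then the function N(x) = F₀(x)^{-1/n} for x ≠ 0, N(0) = 0, is homogeneous of degree 1 (N(rx) = r N(x) for r > 0), nonnegative, continuous, and vanishes only at the origin. -/
open MeasureTheory Set Filter Topology
open scoped ENNReal

private noncomputable def kfun (n : ℕ) (P : SchwartzMap (EuclideanSpace ℝ (Fin n)) ℝ)
    (x : EuclideanSpace ℝ (Fin n)) (t : ℝ) : ℝ :=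
  t ^ (-(n : ℝ)/2) * P ((t ^ (-(1:ℝ)/2)) • x) / t

private lemma ker_norm (n : ℕ) (P : SchwartzMap (EuclideanSpace ℝ (Fin n)) ℝ)
    (x : EuclideanSpace ℝ (Fin n)) {t : ℝ} (ht : 0 < t) :
    ‖kfun n P x t‖ = t ^ (-(n:ℝ)/2 - 1) * |P ((t ^ (-(1:ℝ)/2)) • x)| := by
  have h1 : (0:ℝ) < t ^ (-(n:ℝ)/2) := Real.rpow_pos_of_pos ht _
  rw [kfun, Real.norm_eq_abs, abs_div, abs_mul, abs_of_pos h1, abs_of_pos ht,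
    Real.rpow_sub ht, Real.rpow_one]
  ring

private lemma ker_cont (n : ℕ) (P : SchwartzMap (EuclideanSpace ℝ (Fin n)) ℝ)
    (x : EuclideanSpace ℝ (Fin n)) :
    ContinuousOn (kfun n P x) (Ioi (0:ℝ)) := by
  intro t ht
  have ht' : (t:ℝ) ≠ 0 := ne_of_gt ht
  have h1 : ContinuousAt (fun t : ℝ => t ^ (-(n:ℝ)/2)) t :=
    Real.continuousAt_rpow_const _ _ (Or.inl ht')
  have h2 : ContinuousAt (fun t : ℝ => P ((t ^ (-(1:ℝ)/2)) • x)) t :=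
    P.continuous.continuousAt.comp
      ((Real.continuousAt_rpow_const _ _ (Or.inl ht')).smul continuousAt_const)
  exact (((h1.mul h2).div continuousAt_id ht')).continuousWithinAt

private lemma ker_meas (n : ℕ) (P : SchwartzMap (EuclideanSpace ℝ (Fin n)) ℝ)
    (x : EuclideanSpace ℝ (Fin n)) :
    AEStronglyMeasurable (kfun n P x) (volume.restrict (Ioi (0:ℝ))) :=
  (ker_cont n P x).aestronglyMeasurable measurableSet_Ioi

private lemma ker_pos (n : ℕ) (P : SchwartzMap (EuclideanSpace ℝ (Fin n)) ℝ)
    (hPpos : ∀ x, 0 < P x) (x : EuclideanSpace ℝ (Fin n)) {t : ℝ} (ht : 0 < t) :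
    0 < kfun n P x t :=
  div_pos (mul_pos (Real.rpow_pos_of_pos ht _) (hPpos _)) ht

private lemma kfun_bound (n : ℕ) (P : SchwartzMap (EuclideanSpace ℝ (Fin n)) ℝ)
    {C M a : ℝ} (ha : 0 < a)
    (hC : ∀ y, ‖y‖ ^ (n+4) * |P y| ≤ C) (hM : ∀ y, |P y| ≤ M)
    (x : EuclideanSpace ℝ (Fin n)) (hax : a ≤ ‖x‖) {t : ℝ} (ht : 0 < t) :
    ‖kfun n P x t‖ ≤ (C / a ^ (n+4) + M) * min t (t ^ (-(n:ℝ)/2 - 1)) := by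
  set e : ℝ := -(n:ℝ)/2 - 1 with he
  set y : EuclideanSpace ℝ (Fin n) := (t ^ (-(1:ℝ)/2)) • x with hy
  have hs : (0:ℝ) < t ^ (-(1:ℝ)/2) := Real.rpow_pos_of_pos ht _
  have hM0 : 0 ≤ M := le_trans (abs_nonneg _) (hM 0)
  have hC0 : 0 ≤ C := le_trans (by positivity) (hC 0)
  have hCd : 0 ≤ C / a ^ (n+4) := by positivity
  have hyn : ‖y‖ = t ^ (-(1:ℝ)/2) * ‖x‖ := by
    rw [hy, norm_smul, Real.norm_eq_abs, abs_of_pos hs]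
  rw [ker_norm n P x ht]
  rcases le_total t 1 with h1 | h1
  · have hmin : min t (t ^ e) = t := min_eq_left (le_trans h1
      (Real.one_le_rpow_of_pos_of_le_one_of_nonpos ht h1 (by
        rw [he]; push_cast
        have : (0:ℝ) ≤ (n:ℝ) := Nat.cast_nonneg n
        linarith)))
    rw [hmin]
    -- |P y| ≤ C / (s*a)^(n+4)
    have hsa : (0:ℝ) < t ^ (-(1:ℝ)/2) * a := mul_pos hs ha
    have hyge : t ^ (-(1:ℝ)/2) * a ≤ ‖y‖ := by
      rw [hyn]; exact mul_le_mul_of_nonneg_left hax hs.le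
    have hPy : |P y| ≤ C / (t ^ (-(1:ℝ)/2) * a) ^ (n+4) := by
      rw [le_div_iff₀ (by positivity)]
      calc |P y| * (t ^ (-(1:ℝ)/2) * a) ^ (n+4)
          ≤ |P y| * ‖y‖ ^ (n+4) :=
            mul_le_mul_of_nonneg_left (pow_le_pow_left₀ hsa.le hyge _) (abs_nonneg _)
        _ = ‖y‖ ^ (n+4) * |P y| := by ring
        _ ≤ C := hC y
    have hpowe : t ^ e / (t ^ (-(1:ℝ)/2)) ^ (n+4) = t := by
      rw [← Real.rpow_natCast (t ^ (-(1:ℝ)/2)) (n+4), ← Real.rpow_mul ht.le,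
        ← Real.rpow_sub ht]
      rw [show e - -1/2 * ((n+4:ℕ):ℝ) = 1 by rw [he]; push_cast; ring, Real.rpow_one]
    calc t ^ e * |P y| ≤ t ^ e * (C / (t ^ (-(1:ℝ)/2) * a) ^ (n+4)) :=
          mul_le_mul_of_nonneg_left hPy (Real.rpow_pos_of_pos ht e).le
      _ = (C / a ^ (n+4)) * (t ^ e / (t ^ (-(1:ℝ)/2)) ^ (n+4)) := by
          rw [mul_pow]; field_simp
      _ = (C / a ^ (n+4)) * t := by rw [hpowe]
      _ ≤ (C / a ^ (n+4) + M) * t := by nlinarith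
  · have hmin : min t (t ^ e) = t ^ e := min_eq_right (le_trans
      (Real.rpow_le_one_of_one_le_of_nonpos h1 (by
        rw [he]; push_cast
        have : (0:ℝ) ≤ (n:ℝ) := Nat.cast_nonneg n
        linarith)) h1)
    rw [hmin]
    calc t ^ e * |P y| ≤ t ^ e * M :=
          mul_le_mul_of_nonneg_left (hM y) (Real.rpow_pos_of_pos ht e).le
      _ ≤ (C / a ^ (n+4) + M) * (t ^ e) := by
          have := (Real.rpow_pos_of_pos ht e).le
          nlinarith

private lemma min_int (n : ℕ) (hn : 0 < n) :
    IntegrableOn (fun t : ℝ => min t (t ^ (-(n:ℝ)/2 - 1))) (Ioi (0:ℝ)) := by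
  have he : (-(n:ℝ)/2 - 1) < -1 := by
    have : (1:ℝ) ≤ (n:ℝ) := by exact_mod_cast hn
    linarith
  have h1 : IntegrableOn (fun t : ℝ => min t (t ^ (-(n:ℝ)/2 - 1))) (Ioc (0:ℝ) 1) := by
    refine (continuous_id.integrableOn_Icc (a := (0:ℝ)) (b := 1)).mono_set
      Ioc_subset_Icc_self |>.congr_fun (fun t ht => ?_) measurableSet_Ioc
    exact (min_eq_left (le_trans ht.2
      (Real.one_le_rpow_of_pos_of_le_one_of_nonpos ht.1 ht.2 (by linarith)))).symm
  have h2 : IntegrableOn (fun t : ℝ => min t (t ^ (-(n:ℝ)/2 - 1))) (Ioi (1:ℝ)) := by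
    refine (integrableOn_Ioi_rpow_of_lt he zero_lt_one).congr_fun (fun t ht => ?_)
      measurableSet_Ioi
    have ht1 : (1:ℝ) ≤ t := le_of_lt ht
    exact (min_eq_right (le_trans
      (Real.rpow_le_one_of_one_le_of_nonpos ht1 (by linarith)) ht1)).symm
  have := h1.union h2
  rwa [Ioc_union_Ioi_eq_Ioi zero_le_one] at this

private lemma kfun_int (n : ℕ) (hn : 0 < n) (P : SchwartzMap (EuclideanSpace ℝ (Fin n)) ℝ)
    {C M a : ℝ} (ha : 0 < a)
    (hC : ∀ y, ‖y‖ ^ (n+4) * |P y| ≤ C) (hM : ∀ y, |P y| ≤ M)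
    (x : EuclideanSpace ℝ (Fin n)) (hax : a ≤ ‖x‖) :
    IntegrableOn (kfun n P x) (Ioi (0:ℝ)) := by
  refine Integrable.mono' (((min_int n hn).const_mul (C / a ^ (n+4) + M)))
    (ker_meas n P x) ?_
  exact (ae_restrict_iff' measurableSet_Ioi).2 (ae_of_all _ fun t ht =>
    kfun_bound n P ha hC hM x hax ht)

private lemma kfun_integral_pos (n : ℕ) (hn : 0 < n)
    (P : SchwartzMap (EuclideanSpace ℝ (Fin n)) ℝ) (hPpos : ∀ x, 0 < P x)
    (x : EuclideanSpace ℝ (Fin n)) (hx : IntegrableOn (kfun n P x) (Ioi (0:ℝ))) :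
    0 < ∫ t in Ioi (0:ℝ), kfun n P x t := by
  have hnn : 0 ≤ᶠ[ae (volume.restrict (Ioi (0:ℝ)))] kfun n P x :=
    (ae_restrict_iff' measurableSet_Ioi).2 (ae_of_all _ fun t ht =>
      (ker_pos n P hPpos x ht).le)
  rw [setIntegral_pos_iff_support_of_nonneg_ae hnn hx]
  have hsub : Ioi (0:ℝ) ⊆ Function.support (kfun n P x) ∩ Ioi 0 :=
    fun t ht => ⟨(ker_pos n P hPpos x ht).ne', ht⟩
  calc (0:ℝ≥0∞) < volume (Ioi (0:ℝ)) := by simp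
    _ ≤ _ := measure_mono hsub

private lemma rpow_neg_two' (r : ℝ) (hr : 0 < r) : r ^ (-2:ℝ) = r⁻¹ ^ 2 := by
  rw [show (-2:ℝ) = ((-2:ℤ):ℝ) by norm_num, Real.rpow_intCast]
  simp [zpow_neg, inv_pow, zpow_ofNat]

private lemma rpow_inv_sq (r : ℝ) (hr : 0 < r) (q : ℝ) :
    (r⁻¹ ^ 2) ^ q = r ^ (-2 * q) := by
  rw [← rpow_neg_two' r hr, ← Real.rpow_mul hr.le]

private lemma kfun_scale (n : ℕ) (P : SchwartzMap (EuclideanSpace ℝ (Fin n)) ℝ)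
    (r : ℝ) (hr : 0 < r) (x : EuclideanSpace ℝ (Fin n)) {t : ℝ} (ht : 0 < t) :
    kfun n P (r • x) t = r ^ (-(n:ℝ) - 2) * kfun n P x (t * r⁻¹ ^ 2) := by
  have hr2 : (0:ℝ) < r⁻¹ ^ 2 := by positivity
  have htr : (0:ℝ) < t * r⁻¹ ^ 2 := mul_pos ht hr2
  rw [kfun, kfun]
  rw [Real.mul_rpow ht.le hr2.le, Real.mul_rpow ht.le hr2.le, rpow_inv_sq r hr,
    rpow_inv_sq r hr]
  have harg : (t ^ (-(1:ℝ)/2) * r ^ (-2 * (-(1:ℝ)/2))) • x = (t ^ (-(1:ℝ)/2)) • (r • x) := by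
    rw [show (-2 : ℝ) * (-(1:ℝ)/2) = 1 by norm_num, Real.rpow_one, smul_smul]
  rw [harg, show (-2:ℝ) * (-(n:ℝ)/2) = (n:ℝ) by ring]
  have hbc : r ^ (-(n:ℝ)-2) * r ^ (n:ℝ) = r⁻¹ ^ 2 := by
    rw [← Real.rpow_add hr, show -(n:ℝ)-2+(n:ℝ) = -2 by ring, rpow_neg_two' r hr]
  set a := t ^ (-(n:ℝ)/2)
  set Pv := (P ((t ^ (-(1:ℝ)/2)) • (r • x)) : ℝ)
  calc a * Pv / t = r⁻¹^2 * a * Pv / (t * r⁻¹^2) := by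
        field_simp
        try ring
    _ = (r ^ (-(n:ℝ)-2) * r ^ (n:ℝ)) * a * Pv / (t * r⁻¹^2) := by rw [hbc]
    _ = r ^ (-(n:ℝ)-2) * (a * r ^ (n:ℝ) * Pv / (t * r⁻¹^2)) := by ring

private lemma kfun_integral_scale (n : ℕ) (P : SchwartzMap (EuclideanSpace ℝ (Fin n)) ℝ)
    (r : ℝ) (hr : 0 < r) (x : EuclideanSpace ℝ (Fin n)) :
    (∫ t in Ioi (0:ℝ), kfun n P (r • x) t)
      = r ^ (-(n:ℝ)) * ∫ t in Ioi (0:ℝ), kfun n P x t := by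
  have hr2 : (0:ℝ) < r⁻¹ ^ 2 := by positivity
  rw [setIntegral_congr_fun measurableSet_Ioi
    (fun t ht => kfun_scale n P r hr x ht)]
  rw [MeasureTheory.integral_const_mul]
  rw [MeasureTheory.integral_comp_mul_right_Ioi (kfun n P x) 0 hr2]
  rw [zero_mul, smul_eq_mul, ← mul_assoc]
  congr 1
  have h2 : (r⁻¹ ^ 2)⁻¹ = r ^ (2:ℝ) := by
    rw [← rpow_neg_two' r hr, ← Real.rpow_neg_one, ← Real.rpow_mul hr.le]
    norm_num
  rw [h2, ← Real.rpow_add hr]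
  norm_num

private lemma kfun_contAt (n : ℕ) (P : SchwartzMap (EuclideanSpace ℝ (Fin n)) ℝ)
    {t : ℝ} (ht : t ∈ Ioi (0:ℝ)) (x₀ : EuclideanSpace ℝ (Fin n)) :
    ContinuousAt (fun x => kfun n P x t) x₀ := by
  have : ContinuousAt (fun x : EuclideanSpace ℝ (Fin n) =>
      P ((t ^ (-(1:ℝ)/2)) • x)) x₀ :=
    P.continuous.continuousAt.comp (continuous_const_smul (t ^ (-(1:ℝ)/2))).continuousAt
  exact (continuousAt_const.mul this).div continuousAt_const (ne_of_gt ht)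

private lemma F_contAt (n : ℕ) (hn : 0 < n) (P : SchwartzMap (EuclideanSpace ℝ (Fin n)) ℝ)
    {C M : ℝ} (hC : ∀ y, ‖y‖ ^ (n+4) * |P y| ≤ C) (hM : ∀ y, |P y| ≤ M)
    (x₀ : EuclideanSpace ℝ (Fin n)) (hx₀ : x₀ ≠ 0) :
    ContinuousAt (fun x => ∫ t in Ioi (0:ℝ), kfun n P x t) x₀ := by
  set a : ℝ := ‖x₀‖ / 2 with ha_def
  have ha : 0 < a := by
    have : 0 < ‖x₀‖ := norm_pos_iff.2 hx₀
    positivity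
  have hnb : ∀ᶠ x in 𝓝 x₀, a ≤ ‖x‖ := by
    have : ∀ᶠ x in 𝓝 x₀, x ∈ Metric.ball x₀ a :=
      Metric.ball_mem_nhds x₀ ha
    filter_upwards [this] with x hx
    have h1 : ‖x - x₀‖ < a := by simpa [dist_eq_norm] using hx
    have h2 : ‖x₀‖ - ‖x‖ ≤ ‖x₀ - x‖ := norm_sub_norm_le _ _
    have h3 : ‖x₀ - x‖ = ‖x - x₀‖ := norm_sub_rev _ _
    have h4 : ‖x₀‖ = 2 * a := by rw [ha_def]; ring
    linarith
  refine continuousAt_of_dominated (bound := fun t => (C / a ^ (n+4) + M) * min t (t ^ (-(n:ℝ)/2 - 1))) ?_ ?_ ?_ ?_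
  · exact Eventually.of_forall fun x => ker_meas n P x
  · filter_upwards [hnb] with x hx
    exact (ae_restrict_iff' measurableSet_Ioi).2 (ae_of_all _ fun t ht =>
      kfun_bound n P ha hC hM x hx ht)
  · exact (min_int n hn).const_mul _
  · exact (ae_restrict_iff' measurableSet_Ioi).2 (ae_of_all _ fun t ht =>
      kfun_contAt n P ht x₀)

theorem homogeneous_norm_from_kernel (n : ℕ) (hn : 0 < n)
    (P : SchwartzMap (EuclideanSpace ℝ (Fin n)) ℝ) (hPpos : ∀ x, 0 < P x)
    (hPint : ∫ x, P x = 1) (N : EuclideanSpace ℝ (Fin n) → ℝ)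
    (hN : ∀ x : EuclideanSpace ℝ (Fin n), x ≠ 0 →
      N x = (∫ t in Ioi (0:ℝ), t ^ (-(n : ℝ)/2) * P ((t ^ (-(1:ℝ)/2)) • x) / t)
              ^ (-(1:ℝ) / (n : ℝ)))
    (hN0 : N 0 = 0) :
    (∀ r : ℝ, 0 < r → ∀ x, N (r • x) = r * N x) ∧ (∀ x, 0 ≤ N x) ∧ Continuous N ∧
      ∀ x, N x = 0 ↔ x = 0 := by
  have hN' : ∀ x : EuclideanSpace ℝ (Fin n), x ≠ 0 →
      N x = (∫ t in Ioi (0:ℝ), kfun n P x t) ^ (-(1:ℝ) / (n:ℝ)) := hN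
  obtain ⟨C, hC0, hC⟩ := P.decay (n + 4) 0
  obtain ⟨M, hM0, hM⟩ := P.decay 0 0
  have hCb : ∀ y, ‖y‖ ^ (n+4) * |P y| ≤ C := by
    intro y; simpa [norm_iteratedFDeriv_zero] using hC y
  have hMb : ∀ y, |P y| ≤ M := by
    intro y; simpa [norm_iteratedFDeriv_zero] using hM y
  have hint : ∀ x : EuclideanSpace ℝ (Fin n), x ≠ 0 →
      IntegrableOn (kfun n P x) (Ioi (0:ℝ)) :=
    fun x hx => kfun_int n hn P (norm_pos_iff.2 hx) hCb hMb x le_rfl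
  have hFpos : ∀ x : EuclideanSpace ℝ (Fin n), x ≠ 0 →
      0 < ∫ t in Ioi (0:ℝ), kfun n P x t :=
    fun x hx => kfun_integral_pos n hn P hPpos x (hint x hx)
  have hNpos : ∀ x : EuclideanSpace ℝ (Fin n), x ≠ 0 → 0 < N x := by
    intro x hx; rw [hN' x hx]; exact Real.rpow_pos_of_pos (hFpos x hx) _
  have hhom : ∀ r : ℝ, 0 < r → ∀ x, N (r • x) = r * N x := by
    intro r hr x
    rcases eq_or_ne x 0 with rfl | hx
    · simp [hN0]
    have hrx : r • x ≠ 0 := smul_ne_zero (ne_of_gt hr) hx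
    rw [hN' _ hrx, hN' _ hx, kfun_integral_scale n P r hr x,
      Real.mul_rpow (Real.rpow_nonneg hr.le _) (hFpos x hx).le,
      ← Real.rpow_mul hr.le,
      show (-(n:ℝ)) * (-(1:ℝ)/(n:ℝ)) = 1 by
        field_simp,
      Real.rpow_one]
  have hnonneg : ∀ x, 0 ≤ N x := by
    intro x; rcases eq_or_ne x 0 with rfl | hx
    · rw [hN0]
    · exact (hNpos x hx).le
  have hiff : ∀ x, N x = 0 ↔ x = 0 := by
    intro x
    constructor
    · intro h; by_contra hx; exact (hNpos x hx).ne' h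
    · rintro rfl; exact hN0
  have hcontAt : ∀ x₀ : EuclideanSpace ℝ (Fin n), x₀ ≠ 0 → ContinuousAt N x₀ := by
    intro x₀ hx₀
    have hF := F_contAt n hn P hCb hMb x₀ hx₀
    have hrpow : ContinuousAt (fun y : ℝ => y ^ (-(1:ℝ)/(n:ℝ)))
        (∫ t in Ioi (0:ℝ), kfun n P x₀ t) :=
      Real.continuousAt_rpow_const _ _ (Or.inl (hFpos x₀ hx₀).ne')
    have hcomp : ContinuousAt
        (fun x => (∫ t in Ioi (0:ℝ), kfun n P x t) ^ (-(1:ℝ)/(n:ℝ))) x₀ :=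
      ContinuousAt.comp (g := fun y : ℝ => y ^ (-(1:ℝ)/(n:ℝ)))
        (f := fun x : EuclideanSpace ℝ (Fin n) => ∫ t in Ioi (0:ℝ), kfun n P x t)
        hrpow hF
    refine hcomp.congr ?_
    filter_upwards [isOpen_compl_singleton.mem_nhds hx₀] with x hx
    exact (hN' x hx).symm
  obtain ⟨B, hB⟩ := (isCompact_sphere (0 : EuclideanSpace ℝ (Fin n)) 1).exists_bound_of_continuousOn
    (fun u hu => (hcontAt u (by
      rw [mem_sphere_zero_iff_norm] at hu
      intro h; rw [h] at hu; simp at hu)).continuousWithinAt)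
  have hBb : ∀ u : EuclideanSpace ℝ (Fin n), ‖u‖ = 1 → N u ≤ max B 0 := by
    intro u hu
    have := hB u (by rwa [mem_sphere_zero_iff_norm])
    calc N u ≤ ‖N u‖ := le_abs_self _
      _ ≤ B := this
      _ ≤ max B 0 := le_max_left _ _
  have hbound : ∀ x, N x ≤ max B 0 * ‖x‖ := by
    intro x
    rcases eq_or_ne x 0 with rfl | hx
    · simp [hN0]
    · have hnx : 0 < ‖x‖ := norm_pos_iff.2 hx
      have hu : ‖(‖x‖⁻¹ • x : EuclideanSpace ℝ (Fin n))‖ = 1 := by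
        rw [norm_smul, Real.norm_eq_abs, abs_of_pos (inv_pos.2 hnx),
          inv_mul_cancel₀ hnx.ne']
      have h1 := hhom ‖x‖ hnx (‖x‖⁻¹ • x)
      rw [smul_smul, mul_inv_cancel₀ hnx.ne', one_smul] at h1
      rw [h1, mul_comm (max B 0) ‖x‖]
      exact mul_le_mul_of_nonneg_left (hBb _ hu) hnx.le
  have hcont0 : ContinuousAt N 0 := by
    rw [ContinuousAt, hN0]
    have hg : Tendsto (fun x : EuclideanSpace ℝ (Fin n) => max B 0 * ‖x‖) (𝓝 0) (𝓝 0) := by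
      have hc : Continuous (fun x : EuclideanSpace ℝ (Fin n) => max B 0 * ‖x‖) :=
        continuous_const.mul continuous_norm
      have := hc.tendsto (0 : EuclideanSpace ℝ (Fin n))
      simpa using this
    exact squeeze_zero hnonneg hbound hg
  refine ⟨hhom, hnonneg, ?_, hiff⟩
  rw [continuous_iff_continuousAt]
  intro x
  rcases eq_or_ne x 0 with rfl | hx
  · exact hcont0
  · exact hcontAt x hx
end
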